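/- For all non-negative integers n and m, the q-super Catalan number A_{n,m}(q) = [2n]!_q [2m]!_q / ([n]!_q [n+m]!_q [m]!_q) is a polynomial in q with non-negative integer coefficients. -/

import Mathlib

open Polynomial

/-- The `q`-factorial `[n]! = ∏_{i=1}^n (1 + q + ⋯ + q^{i-1})` as a polynomial over `ℤ`. -/
noncomputable def qFactorial (n : ℕ) : Polynomial ℤ :=
  ∏ i ∈ Finset.range n, ∑ j ∈ Finset.range (i + 1), X ^ j

noncomputable def qInt (n : ℕ) : Polynomial ℤ := ∑ j ∈ Finset.range n, X ^ j

noncomputable def qBinom : ℕ → ℕ → Polynomial ℤ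
  | _, 0 => 1
  | 0, _+1 => 0
  | n+1, k+1 => qBinom n k + X ^ (k+1) * qBinom n (k+1)

@[simp] lemma qBinom_zero (n : ℕ) : qBinom n 0 = 1 := by cases n <;> rfl

lemma qBinom_succ (n k : ℕ) :
    qBinom (n+1) (k+1) = qBinom n k + X ^ (k+1) * qBinom n (k+1) := rfl

lemma qBinom_eq_zero {n k : ℕ} (h : n < k) : qBinom n k = 0 := by
  induction n generalizing k with
  | zero => obtain ⟨k, rfl⟩ := Nat.exists_eq_add_of_lt h; rfl
  | succ n ih =>
    obtain ⟨k, rfl⟩ : ∃ j, k = j + 1 := ⟨k - 1, by omega⟩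
    rw [qBinom_succ, ih (by omega), ih (by omega)]
    simp

@[simp] lemma qBinom_self (n : ℕ) : qBinom n n = 1 := by
  induction n with
  | zero => rfl
  | succ n ih => rw [qBinom_succ, ih, qBinom_eq_zero (by omega)]; simp

lemma qFactorial_succ (n : ℕ) : qFactorial (n+1) = qFactorial n * qInt (n+1) := by
  rw [qFactorial, Finset.prod_range_succ]; rfl

@[simp] lemma qFactorial_zero : qFactorial 0 = 1 := rfl

@[simp] lemma qInt_zero : qInt 0 = 0 := rfl

lemma qInt_add (a b : ℕ) : qInt (a + b) = qInt a + X ^ a * qInt b := by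
  rw [qInt, qInt, qInt, Finset.range_eq_Ico, ← Finset.sum_Ico_consecutive _ (Nat.zero_le a) (Nat.le_add_right a b)]
  congr 1
  · rw [Finset.range_eq_Ico]
  rw [Finset.mul_sum, Finset.sum_Ico_eq_sum_range]
  apply Finset.sum_congr (by simp) 
  intro j hj
  rw [← pow_add]

lemma qInt_succ' (n : ℕ) : qInt (n+1) = 1 + X * qInt n := by
  have := qInt_add 1 n
  rw [Nat.add_comm 1 n] at this
  simpa [qInt] using this

lemma qBinom_one (n : ℕ) : qBinom n 1 = qInt n := by
  induction n with
  | zero => simp [qBinom_eq_zero]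
  | succ n ih =>
    rw [qBinom_succ, ih, qBinom_zero, qInt_succ', pow_one]

lemma qBinom_spec : ∀ a b : ℕ, qBinom (a+b) a * (qFactorial a * qFactorial b) = qFactorial (a+b) := by
  intro a
  induction a with
  | zero => intro b; simp
  | succ a iha =>
    intro b
    induction b with
    | zero => simp
    | succ b ihb =>
      have h1 : a + 1 + (b + 1) = (a + (b+1)) + 1 := by omega
      rw [h1, qBinom_succ, qFactorial_succ (a + (b+1))]
      have e1 := iha (b+1)
      have e2 := ihb
      rw [show a + 1 + b = a + (b+1) from by omega] at e2
      have h4 : qInt (a + (b+1) + 1) = qInt (a+1) + X ^ (a+1) * qInt (b+1) := by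
        rw [show a + (b+1) + 1 = (a+1) + (b+1) from by omega, qInt_add]
      rw [h4, qFactorial_succ a, qFactorial_succ b] at *
      linear_combination qInt (a+1) * e1 + (X ^ (a+1) * qInt (b+1)) * e2

lemma qBinom_spec' {n k : ℕ} (h : k ≤ n) :
    qBinom n k * (qFactorial k * qFactorial (n - k)) = qFactorial n := by
  have := qBinom_spec k (n - k)
  rwa [Nat.add_sub_cancel' h] at this

lemma qFactorial_eval_one (n : ℕ) : (qFactorial n).eval 1 = (n.factorial : ℤ) := by
  induction n with
  | zero => simp
  | succ n ih =>
    rw [qFactorial_succ, eval_mul, ih, qInt, eval_finset_sum]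
    simp [Nat.factorial_succ]
    ring

lemma qFactorial_ne_zero (n : ℕ) : qFactorial n ≠ 0 := by
  intro h
  have := qFactorial_eval_one n
  rw [h] at this
  simp at this
  exact Nat.factorial_ne_zero n (by exact_mod_cast this.symm)

lemma qBinom_succ' (n k : ℕ) :
    qBinom (n+1) (k+1) = X ^ (n-k) * qBinom n k + qBinom n (k+1) := by
  rcases Nat.lt_or_ge k n with h | h
  · -- k < n
    apply mul_right_cancel₀ (b := qFactorial (k+1) * qFactorial (n-k))
      (mul_ne_zero (qFactorial_ne_zero _) (qFactorial_ne_zero _))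
    have e0 : qBinom (n+1) (k+1) * (qFactorial (k+1) * qFactorial (n-k)) = qFactorial (n+1) := by
      have := qBinom_spec (k+1) (n-k)
      rwa [show k + 1 + (n-k) = n+1 from by omega] at this
    have e1 : qBinom n k * (qFactorial k * qFactorial (n-k)) = qFactorial n := by
      have := qBinom_spec k (n-k)
      rwa [show k + (n-k) = n from by omega] at this
    have e2 : qBinom n (k+1) * (qFactorial (k+1) * qFactorial (n-k-1)) = qFactorial n := by
      have := qBinom_spec (k+1) (n-k-1)
      rwa [show k + 1 + (n-k-1) = n from by omega] at this
    have e3 : qFactorial (n-k) = qFactorial (n-k-1) * qInt (n-k) := by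
      rw [show n - k = (n-k-1)+1 from by omega, qFactorial_succ,
        show n-k-1+1 = n-k from by omega]
    have e4 : qInt (n+1) = qInt (n-k) + X ^ (n-k) * qInt (k+1) := by
      rw [show n+1 = (n-k) + (k+1) from by omega, qInt_add]
    have e5 : qFactorial (n+1) = qFactorial n * qInt (n+1) := qFactorial_succ n
    have e6 : qFactorial (k+1) = qFactorial k * qInt (k+1) := qFactorial_succ k
    rw [e0]
    linear_combination e5 + qFactorial n * e4 - X ^ (n-k) * qInt (k+1) * e1 -
      X ^ (n-k) * qBinom n k * qFactorial (n-k) * e6 - qInt (n-k) * e2 -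
      qBinom n (k+1) * qFactorial (k+1) * e3
  · rcases Nat.eq_or_lt_of_le h with rfl | h2
    · simp [qBinom_eq_zero]
    · rw [qBinom_eq_zero (show n < k+1 from by omega),
        qBinom_eq_zero (show n+1 < k+1 from by omega),
        qBinom_eq_zero (show n < k from by omega)]
      simp

lemma qVandermonde : ∀ (b c a : ℕ), qBinom (a+b) c =
    ∑ i ∈ Finset.range (c+1), X ^ ((a-i)*(c-i)) * (qBinom a i * qBinom b (c-i)) := by
  intro b
  induction b with
  | zero =>
    intro c a
    rw [Finset.sum_eq_single_of_mem c (Finset.self_mem_range_succ c)]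
    · simp
    · intro i hi hne
      simp only [Finset.mem_range] at hi
      rw [qBinom_eq_zero (show (0:ℕ) < c - i from by omega)]
      ring
  | succ b ih =>
    intro c a
    cases c with
    | zero => simp
    | succ c =>
      have key : ∀ i ∈ Finset.range (c+1),
          X ^ ((a-i)*(c+1-i)) * (qBinom a i * qBinom (b+1) (c+1-i)) =
          X ^ (a+b-c) * (X ^ ((a-i)*(c-i)) * (qBinom a i * qBinom b (c-i))) +
            X ^ ((a-i)*(c+1-i)) * (qBinom a i * qBinom b (c+1-i)) := by
        intro i hi
        simp only [Finset.mem_range] at hi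
        have hc : c + 1 - i = (c - i) + 1 := by omega
        rw [hc, qBinom_succ' b (c-i)]
        by_cases ha : i ≤ a
        · by_cases hb : c - i ≤ b
          · have he : (a-i)*((c-i)+1) + (b-(c-i)) = (a+b-c) + (a-i)*(c-i) := by
              rw [Nat.mul_succ]
              generalize (a-i)*(c-i) = t
              omega
            have e' : (X:Polynomial ℤ) ^ ((a-i)*((c-i)+1)) * X ^ (b-(c-i)) =
                X ^ (a+b-c) * X ^ ((a-i)*(c-i)) := by
              rw [← pow_add, ← pow_add, he]
            linear_combination (qBinom a i * qBinom b (c-i)) * e'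
          · rw [qBinom_eq_zero (show b < c - i from by omega),
              qBinom_eq_zero (show b < c - i + 1 from by omega)]
            ring
        · rw [qBinom_eq_zero (show a < i from by omega)]
          ring
      have split2 := Finset.sum_range_succ
        (fun i => X ^ ((a-i)*(c+1-i)) * (qBinom a i * qBinom b (c+1-i))) (c+1)
      have split3 := Finset.sum_range_succ
        (fun i => X ^ ((a-i)*(c+1-i)) * (qBinom a i * qBinom (b+1) (c+1-i))) (c+1)
      calc qBinom (a + (b+1)) (c+1)
          = qBinom ((a+b)+1) (c+1) := by rw [show a + (b+1) = (a+b)+1 from rfl]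
        _ = X ^ ((a+b)-c) * qBinom (a+b) c + qBinom (a+b) (c+1) := qBinom_succ' _ _
        _ = (∑ i ∈ Finset.range (c+1), X ^ (a+b-c) *
              (X ^ ((a-i)*(c-i)) * (qBinom a i * qBinom b (c-i)))) +
            (∑ i ∈ Finset.range (c+1+1), X ^ ((a-i)*(c+1-i)) * (qBinom a i * qBinom b (c+1-i))) := by
            rw [ih c a, ih (c+1) a, Finset.mul_sum]
        _ = (∑ i ∈ Finset.range (c+1), (X ^ (a+b-c) *
              (X ^ ((a-i)*(c-i)) * (qBinom a i * qBinom b (c-i))) +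
              X ^ ((a-i)*(c+1-i)) * (qBinom a i * qBinom b (c+1-i)))) +
              X ^ ((a-(c+1))*(c+1-(c+1))) * (qBinom a (c+1) * qBinom b (c+1-(c+1))) := by
            rw [split2, Finset.sum_add_distrib]
            ring
        _ = (∑ i ∈ Finset.range (c+1), X ^ ((a-i)*(c+1-i)) * (qBinom a i * qBinom (b+1) (c+1-i))) +
              X ^ ((a-(c+1))*(c+1-(c+1))) * (qBinom a (c+1) * qBinom (b+1) (c+1-(c+1))) := by
            rw [Finset.sum_congr rfl key]
            norm_num
        _ = ∑ i ∈ Finset.range (c+1+1), X ^ ((a-i)*(c+1-i)) * (qBinom a i * qBinom (b+1) (c+1-i)) := by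
            rw [split3]

def PNonneg (p : Polynomial ℤ) : Prop := ∀ i, 0 ≤ p.coeff i

lemma PNonneg.add {p q : Polynomial ℤ} (hp : PNonneg p) (hq : PNonneg q) : PNonneg (p + q) := by
  intro i; rw [coeff_add]; exact add_nonneg (hp i) (hq i)

lemma PNonneg.mul {p q : Polynomial ℤ} (hp : PNonneg p) (hq : PNonneg q) : PNonneg (p * q) := by
  intro i
  rw [coeff_mul]
  exact Finset.sum_nonneg fun x _ => mul_nonneg (hp _) (hq _)

lemma PNonneg.one : PNonneg (1 : Polynomial ℤ) := by
  intro i; rw [coeff_one]; positivity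

lemma PNonneg.zero : PNonneg (0 : Polynomial ℤ) := by
  intro i; simp

lemma PNonneg.X_pow (e : ℕ) : PNonneg ((X : Polynomial ℤ) ^ e) := by
  intro i; rw [coeff_X_pow]; positivity

lemma PNonneg.sum {s : Finset ℕ} {f : ℕ → Polynomial ℤ} (h : ∀ i ∈ s, PNonneg (f i)) :
    PNonneg (∑ i ∈ s, f i) := by
  intro j
  rw [finset_sum_coeff]
  exact Finset.sum_nonneg fun x hx => h x hx j

lemma qBinom_nonneg (n k : ℕ) : PNonneg (qBinom n k) := by
  induction n generalizing k with
  | zero => cases k with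
    | zero => exact PNonneg.one
    | succ k => exact PNonneg.zero
  | succ n ih =>
    cases k with
    | zero => exact PNonneg.one
    | succ k =>
      rw [qBinom_succ]
      exact (ih k).add ((PNonneg.X_pow _).mul (ih (k+1)))

lemma claimC (m i k l : ℕ) (Q : Polynomial ℤ)
    (hQ : qFactorial (2*i) * qFactorial (2*m) = Q * (qFactorial i * qFactorial (i+m) * qFactorial m)) :
    (qBinom (m+2*i+k+l) (i+k) * (qBinom (i+k) i * qBinom (m+i+l) l)) *
      (qFactorial (2*i+k+l) * qFactorial (2*m)) =
    (qBinom (2*i+k+l) (2*i) * qBinom (k+l) k * Q) *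
      (qFactorial (m+2*i+k+l) * qFactorial m) := by
  have hZ : qFactorial i * qFactorial k * qFactorial l * qFactorial (m+i) *
      qFactorial (m+i+l) ≠ 0 := by
    repeat' apply mul_ne_zero
    all_goals exact qFactorial_ne_zero _
  refine mul_right_cancel₀ hZ ?_
  have E1 := qBinom_spec i k
  have E2 := qBinom_spec l (m+i)
  rw [show l + (m+i) = m+i+l from by omega] at E2
  have E3 := qBinom_spec (i+k) (m+i+l)
  rw [show (i+k) + (m+i+l) = m+2*i+k+l from by omega] at E3
  have E4 := hQ
  rw [show i+m = m+i from by omega] at E4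
  have E5 := qBinom_spec k l
  have E6 := qBinom_spec (2*i) (k+l)
  rw [show 2*i + (k+l) = 2*i+k+l from by omega] at E6
  linear_combination
    (qBinom (m+2*i+k+l) (i+k) * qBinom (m+i+l) l * qFactorial (2*i+k+l) * qFactorial (2*m) *
      qFactorial l * qFactorial (m+i) * qFactorial (m+i+l)) * E1 +
    (qBinom (m+2*i+k+l) (i+k) * qFactorial (2*i+k+l) * qFactorial (2*m) * qFactorial (i+k) *
      qFactorial (m+i+l)) * E2 +
    (qFactorial (2*i+k+l) * qFactorial (2*m) * qFactorial (m+i+l)) * E3 +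
    (qBinom (2*i+k+l) (2*i) * qBinom (k+l) k * qFactorial (m+2*i+k+l) * qFactorial k *
      qFactorial l * qFactorial (m+i+l)) * E4 -
    (qBinom (2*i+k+l) (2*i) * qFactorial (m+2*i+k+l) * qFactorial (m+i+l) * qFactorial (2*i) *
      qFactorial (2*m)) * E5 -
    (qFactorial (m+2*i+k+l) * qFactorial (m+i+l) * qFactorial (2*m)) * E6

lemma key : ∀ (N m n : ℕ), m ≤ n → m + n ≤ N →
    ∃ P : Polynomial ℤ, PNonneg P ∧
      qFactorial (2*n) * qFactorial (2*m) =
        P * (qFactorial n * qFactorial (n+m) * qFactorial m) := by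
  intro N
  induction N with
  | zero =>
    intro m n h1 h2
    obtain rfl : m = 0 := by omega
    obtain rfl : n = 0 := by omega
    exact ⟨1, PNonneg.one, by simp⟩
  | succ N ih =>
    intro m n hmn hN
    obtain ⟨p, rfl⟩ : ∃ p, n = m + p := ⟨n - m, by omega⟩
    rcases Nat.eq_zero_or_pos p with rfl | hp
    · refine ⟨qBinom (2*m) m, qBinom_nonneg _ _, ?_⟩
      have E := qBinom_spec m m
      rw [show m + m = 2*m from by omega] at E
      rw [show m + 0 = m from by omega, show m + m = 2*m from by omega]
      linear_combination (-(qFactorial (2*m))) * E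
    · have Hrec : ∀ i : ℕ, ∃ Q : Polynomial ℤ, PNonneg Q ∧ (i < p →
          qFactorial (2*i) * qFactorial (2*m) =
            Q * (qFactorial i * qFactorial (i+m) * qFactorial m)) := by
        intro i
        by_cases hip : i < p
        · rcases le_or_gt i m with him | hmi
          · obtain ⟨q2, hq2⟩ : ∃ q, m = i + q := ⟨m - i, by omega⟩
            obtain ⟨Q, hQ1, hQ2⟩ := ih i m him (by omega)
            refine ⟨Q, hQ1, fun _ => ?_⟩
            rw [show m + i = i + m from by omega] at hQ2
            linear_combination hQ2
          · obtain ⟨Q, hQ1, hQ2⟩ := ih m i (le_of_lt hmi) (by omega)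
            exact ⟨Q, hQ1, fun _ => hQ2⟩
        · exact ⟨1, PNonneg.one, fun h => absurd h hip⟩
      choose Pf hPf1 hPf2 using Hrec
      refine ⟨∑ s ∈ Finset.range (p+1), ∑ i ∈ Finset.range (min s (p-s) + 1),
        X ^ ((m+p-s)*(p-s) + (s-i)*(p-s-i)) *
          (qBinom p (2*i) * qBinom (p-2*i) (s-i) * Pf i), ?_, ?_⟩
      · exact PNonneg.sum fun s _ => PNonneg.sum fun i _ =>
          (PNonneg.X_pow _).mul
            (((qBinom_nonneg _ _).mul (qBinom_nonneg _ _)).mul (hPf1 i))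
      · have hA : qFactorial (2*(m+p)) =
            qBinom (2*(m+p)) p * (qFactorial p * qFactorial ((m+p)+m)) := by
          have := qBinom_spec p ((m+p)+m)
          rw [show p + ((m+p)+m) = 2*(m+p) from by omega] at this
          exact this.symm
        have hB : qBinom (2*(m+p)) p = ∑ s ∈ Finset.range (p+1),
            X ^ ((m+p-s)*(p-s)) * (qBinom (m+p) s * qBinom (m+p) (p-s)) := by
          have := qVandermonde (m+p) p (m+p)
          rwa [show (m+p)+(m+p) = 2*(m+p) from by omega] at this
        have hC : ∀ s, s ≤ p → qBinom (m+p) (p-s) =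
            ∑ i ∈ Finset.range (min s (p-s) + 1),
              X ^ ((s-i)*((p-s)-i)) * (qBinom s i * qBinom ((m+p)-s) ((p-s)-i)) := by
          intro s hs
          have hV := qVandermonde ((m+p)-s) (p-s) s
          rw [show s + ((m+p)-s) = m+p from by omega] at hV
          rw [hV]
          symm
          apply Finset.sum_subset
          · intro x hx
            simp only [Finset.mem_range] at *
            omega
          · intro x hx hnx
            simp only [Finset.mem_range] at hx hnx
            rw [qBinom_eq_zero (show s < x from by omega)]
            ring
        rw [hA, hB, Finset.sum_mul, Finset.sum_mul, Finset.sum_mul]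
        apply Finset.sum_congr rfl
        intro s hs
        simp only [Finset.mem_range] at hs
        rw [hC s (by omega)]
        simp only [Finset.mul_sum, Finset.sum_mul]
        apply Finset.sum_congr rfl
        intro i hi
        simp only [Finset.mem_range] at hi
        have hip : i < p := by omega
        obtain ⟨k, rfl⟩ : ∃ k, s = i + k := ⟨s - i, by omega⟩
        obtain ⟨l, rfl⟩ : ∃ l, p = 2*i + k + l := ⟨p - (2*i+k), by omega⟩
        have hQ := hPf2 i hip
        have C := claimC m i k l (Pf i) hQ
        rw [show m + (2*i+k+l) - (i+k) = m+i+l from by omega,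
          show (2*i+k+l) - (i+k) = i+l from by omega,
          show (i+k) - i = k from by omega,
          show (i+l) - i = l from by omega,
          show (2*i+k+l) - 2*i = k+l from by omega,
          show m + (2*i+k+l) = m+2*i+k+l from by omega,
          pow_add]
        linear_combination (X ^ ((m+i+l)*(i+l)) * X ^ (k*l) *
          qFactorial ((m+2*i+k+l)+m)) * C

theorem q_super_catalan_positive (n m : ℕ) :
    ∃ P : Polynomial ℤ, (∀ i, 0 ≤ P.coeff i) ∧
      qFactorial (2 * n) * qFactorial (2 * m) =
        P * (qFactorial n * qFactorial (n + m) * qFactorial m) := by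
  rcases le_total m n with h | h
  · exact key (m+n) m n h le_rfl
  · obtain ⟨P, h1, h2⟩ := key (n+m) n m h le_rfl
    refine ⟨P, h1, ?_⟩
    rw [show m+n = n+m from by omega] at h2
    linear_combination h2
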